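/- Arrow's Impossibility Theorem: for at least three candidates and finitely many voters, every constitution mapping profiles of strict linear orders to strict linear orders that respects unanimity and independence of irrelevant alternatives is a dictatorship, i.e., there exists a voter i such that for every profile and every pair (a,b), society ranks a above b iff voter i does. -/

import Mathlib

set_option linter.unusedSectionVars false

namespace ArrowProof

variable {α : Type*} [Fintype α] {N : ℕ}

noncomputable def emb : α → ℕ := fun x => (Fintype.equivFin α x : ℕ)

lemma emb_inj : Function.Injective (emb (α := α)) := fun _ _ h =>
  (Fintype.equivFin α).injective (Fin.val_injective h)

noncomputable def ord (p : α → ℕ) : α → α → Prop :=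
  fun x y => p x < p y ∨ (p x = p y ∧ emb x < emb y)

lemma ord_sto (p : α → ℕ) : IsStrictTotalOrder α (ord p) := by
  refine { trichotomous := ?_, irrefl := ?_, trans := ?_ }
  · intro x y
    suffices H : ord p x y ∨ x = y ∨ ord p y x by
      intro h1 h2; tauto
    rcases lt_trichotomy (p x) (p y) with h | h | h
    · exact Or.inl (Or.inl h)
    · rcases lt_trichotomy (emb x) (emb y) with g | g | g
      · exact Or.inl (Or.inr ⟨h, g⟩)
      · exact Or.inr (Or.inl (emb_inj g))
      · exact Or.inr (Or.inr (Or.inr ⟨h.symm, g⟩))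
    · exact Or.inr (Or.inr (Or.inl h))
  · intro x h
    rcases h with h | ⟨_, h⟩ <;> omega
  · intro x y z h1 h2
    rcases h1 with h | ⟨h, h'⟩ <;> rcases h2 with g | ⟨g, g'⟩
    · left; omega
    · left; omega
    · left; omega
    · right; exact ⟨by omega, by omega⟩

lemma ord_lt {p : α → ℕ} {x y : α} (h : p x < p y) : ord p x y := Or.inl h

lemma ord_not {p : α → ℕ} {x y : α} (h : p x < p y) : ¬ ord p y x := by
  intro hc; rcases hc with g | ⟨g, _⟩ <;> omega

open Classical in
noncomputable def pri3 (a b c : α) : α → ℕ :=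
  fun x => if x = a then 0 else if x = b then 1 else if x = c then 2 else 3

lemma sto_trans {r : α → α → Prop} (h : IsStrictTotalOrder α r) {x y z : α}
    (h1 : r x y) (h2 : r y z) : r x z :=
  h.toIsStrictOrder.toIsTrans.trans x y z h1 h2

lemma sto_irrefl {r : α → α → Prop} (h : IsStrictTotalOrder α r) (x : α) : ¬ r x x :=
  h.toIsStrictOrder.toIrrefl.irrefl x

lemma sto_tri {r : α → α → Prop} (h : IsStrictTotalOrder α r) (x y : α) :
    r x y ∨ x = y ∨ r y x :=
  @trichotomous _ _ h.toTrichotomous x y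

lemma sto_asymm {r : α → α → Prop} (h : IsStrictTotalOrder α r) {x y : α}
    (hxy : r x y) : ¬ r y x := fun hyx => sto_irrefl h x (sto_trans h hxy hyx)

lemma exists_third (hcard : 3 ≤ Fintype.card α) (a b : α) :
    ∃ c : α, c ≠ a ∧ c ≠ b := by
  classical
  by_contra h
  push_neg at h
  have hsub : (Finset.univ : Finset α) ⊆ {a, b} := by
    intro c _
    rcases Classical.em (c = a) with hc | hc
    · simp [hc]
    · simp [h c hc]
  have := Finset.card_le_card hsub
  have h2 : ({a, b} : Finset α).card ≤ 2 :=
    (Finset.card_insert_le _ _).trans (by simp)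
  rw [Finset.card_univ] at this
  omega

lemma exists_triple (hcard : 3 ≤ Fintype.card α) :
    ∃ a b c : α, a ≠ b ∧ c ≠ a ∧ c ≠ b := by
  have : Nonempty α := Fintype.card_pos_iff.mp (by omega)
  obtain ⟨a⟩ := this
  obtain ⟨b, hb, -⟩ := exists_third hcard a a
  obtain ⟨c, hca, hcb⟩ := exists_third hcard a b
  exact ⟨a, b, c, Ne.symm hb, hca, hcb⟩

variable (F : (Fin N → α → α → Prop) → (α → α → Prop))

/-- `S` is decisive for `(a, b)`: whenever exactly the voters in `S` rank `a` above
`b` (and everyone else ranks `b` above `a`), society ranks `a` above `b`. -/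
def Dpair (S : Finset (Fin N)) (a b : α) : Prop :=
  ∀ P : Fin N → α → α → Prop, (∀ j, IsStrictTotalOrder α (P j)) →
    (∀ j ∈ S, P j a b) → (∀ j ∉ S, P j b a) → F P a b

def Dec (S : Finset (Fin N)) : Prop := ∀ a b : α, a ≠ b → Dpair F S a b

variable
  (hF : ∀ P : Fin N → α → α → Prop,
    (∀ i, IsStrictTotalOrder α (P i)) → IsStrictTotalOrder α (F P))
  (hUnan : ∀ P : Fin N → α → α → Prop,
    (∀ i, IsStrictTotalOrder α (P i)) →
    ∀ a b : α, (∀ i, P i a b) → F P a b)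
  (hIIA : ∀ P Q : Fin N → α → α → Prop,
    (∀ i, IsStrictTotalOrder α (P i)) → (∀ i, IsStrictTotalOrder α (Q i)) →
    ∀ a b : α, (∀ i, P i a b ↔ Q i a b) → (F P a b ↔ F Q a b))

include hF hUnan hIIA

lemma step {S : Finset (Fin N)} {a b c : α} (hab : a ≠ b) (hca : c ≠ a) (hcb : c ≠ b)
    (hD : Dpair F S a b) : Dpair F S a c ∧ Dpair F S c b := by
  classical
  have hba : b ≠ a := hab.symm
  have hac : a ≠ c := hca.symm
  have hbc : b ≠ c := hcb.symm
  constructor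
  · -- Dpair F S a c, profile: S ↦ a > b > c, outside ↦ b > c > a
    intro P hP hin hout
    set Q : Fin N → α → α → Prop :=
      fun j => if j ∈ S then ord (pri3 a b c) else ord (pri3 b c a) with hQdef
    have hQ : ∀ j, IsStrictTotalOrder α (Q j) := by
      intro j; by_cases hj : j ∈ S <;> simp only [hQdef, hj, if_true, if_false] <;>
        exact ord_sto _
    have hFab : F Q a b := by
      refine hD Q hQ (fun j hj => ?_) (fun j hj => ?_)
      · simp only [hQdef, hj, if_true]
        exact ord_lt (by simp [pri3, hba])
      · simp only [hQdef, hj, if_false]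
        exact ord_lt (by simp [pri3, hab, hac])
    have hFbc : F Q b c := by
      refine hUnan Q hQ b c (fun j => ?_)
      by_cases hj : j ∈ S <;> simp only [hQdef, hj, if_true, if_false]
      · exact ord_lt (by simp [pri3, hba, hca, hcb])
      · exact ord_lt (by simp [pri3, hcb])
    have hFac : F Q a c := sto_trans (hF Q hQ) hFab hFbc
    rw [hIIA P Q hP hQ a c (fun j => ?_)]
    · exact hFac
    by_cases hj : j ∈ S
    · simp only [hQdef, hj, if_true]
      exact iff_of_true (hin j hj) (ord_lt (by simp [pri3, hca, hcb]))
    · simp only [hQdef, hj, if_false]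
      exact iff_of_false (sto_asymm (hP j) (hout j hj))
        (ord_not (by simp [pri3, hcb, hab, hac]))
  · -- Dpair F S c b, profile: S ↦ c > a > b, outside ↦ b > c > a
    intro P hP hin hout
    set Q : Fin N → α → α → Prop :=
      fun j => if j ∈ S then ord (pri3 c a b) else ord (pri3 b c a) with hQdef
    have hQ : ∀ j, IsStrictTotalOrder α (Q j) := by
      intro j; by_cases hj : j ∈ S <;> simp only [hQdef, hj, if_true, if_false] <;>
        exact ord_sto _
    have hFab : F Q a b := by
      refine hD Q hQ (fun j hj => ?_) (fun j hj => ?_)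
      · simp only [hQdef, hj, if_true]
        exact ord_lt (by simp [pri3, hac, hba, hbc])
      · simp only [hQdef, hj, if_false]
        exact ord_lt (by simp [pri3, hab, hac])
    have hFca : F Q c a := by
      refine hUnan Q hQ c a (fun j => ?_)
      by_cases hj : j ∈ S <;> simp only [hQdef, hj, if_true, if_false]
      · exact ord_lt (by simp [pri3, hac])
      · exact ord_lt (by simp [pri3, hcb, hab, hac])
    have hFcb : F Q c b := sto_trans (hF Q hQ) hFca hFab
    rw [hIIA P Q hP hQ c b (fun j => ?_)]
    · exact hFcb
    by_cases hj : j ∈ S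
    · simp only [hQdef, hj, if_true]
      exact iff_of_true (hin j hj) (ord_lt (by simp [pri3, hba, hbc]))
    · simp only [hQdef, hj, if_false]
      exact iff_of_false (sto_asymm (hP j) (hout j hj))
        (ord_not (by simp [pri3, hcb]))

lemma spread (hcard : 3 ≤ Fintype.card α) {S : Finset (Fin N)} {a b : α}
    (hab : a ≠ b) (hD : Dpair F S a b) : Dec F S := by
  intro x y hxy
  by_cases hxa : x = a
  · subst hxa
    by_cases hyb : y = b
    · subst hyb; exact hD
    · exact (step F hF hUnan hIIA hab (Ne.symm hxy) hyb hD).1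
  · by_cases hxb : x = b
    · subst hxb
      obtain ⟨c, hca, hcb⟩ := exists_third hcard a x
      have hDac := (step F hF hUnan hIIA hab hca hcb hD).1
      have hDbc := (step F hF hUnan hIIA hca.symm hab.symm hcb.symm hDac).2
      have hDba := (step F hF hUnan hIIA hcb.symm hab hca.symm hDbc).1
      by_cases hya : y = a
      · subst hya; exact hDba
      · exact (step F hF hUnan hIIA hab.symm (Ne.symm hxy) hya hDba).1
    · have hDxb := (step F hF hUnan hIIA hab hxa hxb hD).2
      by_cases hyb : y = b
      · subst hyb; exact hDxb
      · exact (step F hF hUnan hIIA hxb (Ne.symm hxy) hyb hDxb).1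


lemma split (hcard : 3 ≤ Fintype.card α) {S S1 S2 : Finset (Fin N)}
    (hdisj : Disjoint S1 S2) (hun : S1 ∪ S2 = S) (hS : Dec F S) :
    Dec F S1 ∨ Dec F S2 := by
  classical
  obtain ⟨a, b, c, hab, hca, hcb⟩ := exists_triple hcard
  have hba : b ≠ a := hab.symm
  have hac : a ≠ c := hca.symm
  have hbc : b ≠ c := hcb.symm
  set Q : Fin N → α → α → Prop :=
    fun j => if j ∈ S1 then ord (pri3 a b c)
      else if j ∈ S2 then ord (pri3 c a b) else ord (pri3 b c a) with hQdef
  have hQ : ∀ j, IsStrictTotalOrder α (Q j) := by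
    intro j
    by_cases h1 : j ∈ S1 <;> by_cases h2 : j ∈ S2 <;>
      simp only [hQdef, h1, h2, if_true, if_false] <;> exact ord_sto _
  have hmem : ∀ j, j ∈ S ↔ (j ∈ S1 ∨ j ∈ S2) := by
    intro j; rw [← hun]; exact Finset.mem_union
  have hFab : F Q a b := by
    refine hS a b hab Q hQ (fun j hj => ?_) (fun j hj => ?_)
    · rcases (hmem j).mp hj with h1 | h2
      · simp only [hQdef, h1, if_true]
        exact ord_lt (by simp [pri3, hba])
      · have h1 : j ∉ S1 := fun h => (Finset.disjoint_left.mp hdisj h) h2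
        simp only [hQdef, h1, h2, if_true, if_false]
        exact ord_lt (by simp [pri3, hac, hba, hbc])
    · have h1 : j ∉ S1 := fun h => hj ((hmem j).mpr (Or.inl h))
      have h2 : j ∉ S2 := fun h => hj ((hmem j).mpr (Or.inr h))
      simp only [hQdef, h1, h2, if_false]
      exact ord_lt (by simp [pri3, hab, hac])
  rcases sto_tri (hF Q hQ) a c with hFac | heq | hFca
  · -- S1 is decisive for (a, c)
    left
    refine spread F hF hUnan hIIA hcard hac (fun P hP hin hout => ?_)
    rw [hIIA P Q hP hQ a c (fun j => ?_)]
    · exact hFac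
    by_cases h1 : j ∈ S1
    · simp only [hQdef, h1, if_true]
      exact iff_of_true (hin j h1) (ord_lt (by simp [pri3, hca, hcb]))
    · refine iff_of_false (sto_asymm (hP j) (hout j h1)) ?_
      by_cases h2 : j ∈ S2
      · simp only [hQdef, h1, h2, if_true, if_false]
        exact ord_not (by simp [pri3, hac])
      · simp only [hQdef, h1, h2, if_false]
        exact ord_not (by simp [pri3, hcb, hab, hac])
  · exact absurd heq.symm hca
  · -- S2 is decisive for (c, b)
    right
    have hFcb : F Q c b := sto_trans (hF Q hQ) hFca hFab
    refine spread F hF hUnan hIIA hcard hcb (fun P hP hin hout => ?_)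
    rw [hIIA P Q hP hQ c b (fun j => ?_)]
    · exact hFcb
    by_cases h2 : j ∈ S2
    · have h1 : j ∉ S1 := fun h => (Finset.disjoint_left.mp hdisj h) h2
      simp only [hQdef, h1, h2, if_true, if_false]
      exact iff_of_true (hin j h2) (ord_lt (by simp [pri3, hac, hba, hbc]))
    · refine iff_of_false (sto_asymm (hP j) (hout j h2)) ?_
      by_cases h1 : j ∈ S1
      · simp only [hQdef, h1, if_true]
        exact ord_not (by simp [pri3, hba, hca, hcb])
      · simp only [hQdef, h1, h2, if_false]
        exact ord_not (by simp [pri3, hcb])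

lemma not_dec_empty (hcard : 3 ≤ Fintype.card α) : ¬ Dec F (∅ : Finset (Fin N)) := by
  classical
  intro h
  obtain ⟨a, b, c, hab, hca, hcb⟩ := exists_triple hcard
  set P : Fin N → α → α → Prop := fun _ => ord (pri3 b a c) with hPdef
  have hP : ∀ j, IsStrictTotalOrder α (P j) := fun j => ord_sto _
  have h1 : F P a b :=
    h a b hab P hP (fun j hj => absurd hj (Finset.notMem_empty j))
      (fun j _ => ord_lt (by simp [pri3, hab]))
  have h2 : F P b a := hUnan P hP b a (fun j => ord_lt (by simp [pri3, hab]))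
  exact sto_asymm (hF P hP) h2 h1

lemma exists_dict_set (hcard : 3 ≤ Fintype.card α) :
    ∀ S : Finset (Fin N), Dec F S → S.Nonempty → ∃ i : Fin N, Dec F {i} := by
  intro S
  induction S using Finset.strongInduction with
  | _ S ih =>
    intro hS hne
    obtain ⟨i, hi⟩ := hne
    have hdisj : Disjoint {i} (S.erase i) :=
      Finset.disjoint_singleton_left.mpr (Finset.notMem_erase i S)
    have hun : {i} ∪ S.erase i = S := by
      ext j
      simp only [Finset.mem_union, Finset.mem_singleton, Finset.mem_erase]
      constructor
      · rintro (rfl | ⟨-, h⟩)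
        · exact hi
        · exact h
      · intro hj
        by_cases h : j = i
        · exact Or.inl h
        · exact Or.inr ⟨h, hj⟩
    rcases split F hF hUnan hIIA hcard hdisj hun hS with h | h
    · exact ⟨i, h⟩
    · rcases (S.erase i).eq_empty_or_nonempty with he | hne'
      · rw [he] at h
        exact absurd h (not_dec_empty F hF hUnan hIIA hcard)
      · exact ih (S.erase i) (Finset.erase_ssubset hi) h hne'

lemma dict (hcard : 3 ≤ Fintype.card α) {i : Fin N} (hDec : Dec F {i}) :
    ∀ P : Fin N → α → α → Prop, (∀ j, IsStrictTotalOrder α (P j)) →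
      ∀ a b : α, P i a b → F P a b := by
  classical
  intro P hP a b hiab
  have hab : a ≠ b := by rintro rfl; exact sto_irrefl (hP i) a hiab
  obtain ⟨c, hca, hcb⟩ := exists_third hcard a b
  have hba : b ≠ a := hab.symm
  have hac : a ≠ c := hca.symm
  have hbc : b ≠ c := hcb.symm
  set Q : Fin N → α → α → Prop :=
    fun j => if j = i then ord (pri3 a c b)
      else if P j a b then ord (pri3 c a b) else ord (pri3 c b a) with hQdef
  have hQ : ∀ j, IsStrictTotalOrder α (Q j) := by
    intro j
    by_cases h1 : j = i <;> by_cases h2 : P j a b <;>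
      simp only [hQdef, h1, h2, if_true, if_false] <;> exact ord_sto _
  have h1 : F Q a c := by
    refine hDec a c hac Q hQ (fun j hj => ?_) (fun j hj => ?_)
    · rw [Finset.mem_singleton] at hj
      simp only [hQdef, hj, if_true]
      exact ord_lt (by simp [pri3, hca])
    · rw [Finset.mem_singleton] at hj
      by_cases h2 : P j a b <;> simp only [hQdef, hj, h2, if_true, if_false]
      · exact ord_lt (by simp [pri3, hac])
      · exact ord_lt (by simp [pri3, hac, hab])
  have h2 : F Q c b := by
    refine hUnan Q hQ c b (fun j => ?_)
    by_cases hj : j = i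
    · simp only [hQdef, hj, if_true]
      exact ord_lt (by simp [pri3, hca, hba, hbc])
    · by_cases h2 : P j a b <;> simp only [hQdef, hj, h2, if_true, if_false]
      · exact ord_lt (by simp [pri3, hbc, hba])
      · exact ord_lt (by simp [pri3, hbc])
  have h3 : F Q a b := sto_trans (hF Q hQ) h1 h2
  rw [hIIA P Q hP hQ a b (fun j => ?_)]
  · exact h3
  by_cases hj : j = i
  · subst hj
    simp only [hQdef, if_true]
    exact iff_of_true hiab (ord_lt (by simp [pri3, hba, hbc]))
  · by_cases h2 : P j a b
    · have hQj : Q j = ord (pri3 c a b) := by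
        simp only [hQdef, hj, h2, if_true, if_false]
      rw [hQj]
      exact iff_of_true h2 (ord_lt (by simp [pri3, hac, hba, hbc]))
    · have hQj : Q j = ord (pri3 c b a) := by
        simp only [hQdef, hj, h2, if_true, if_false]
      rw [hQj]
      exact iff_of_false h2 (ord_not (by simp [pri3, hbc, hab, hac]))

end ArrowProof

/-- Arrow's Impossibility Theorem: for at least three candidates and finitely many
voters, every constitution mapping profiles of strict linear orders to strict linear
orders that respects unanimity and independence of irrelevant alternatives is a
dictatorship. -/
theorem arrow_impossibility {α : Type*} [Fintype α] (hcard : 3 ≤ Fintype.card α)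
    {N : ℕ}
    (F : (Fin N → α → α → Prop) → (α → α → Prop))
    (hF : ∀ P : Fin N → α → α → Prop,
      (∀ i, IsStrictTotalOrder α (P i)) → IsStrictTotalOrder α (F P))
    (hUnan : ∀ P : Fin N → α → α → Prop,
      (∀ i, IsStrictTotalOrder α (P i)) →
      ∀ a b : α, (∀ i, P i a b) → F P a b)
    (hIIA : ∀ P Q : Fin N → α → α → Prop,
      (∀ i, IsStrictTotalOrder α (P i)) → (∀ i, IsStrictTotalOrder α (Q i)) →
      ∀ a b : α, (∀ i, P i a b ↔ Q i a b) → (F P a b ↔ F Q a b)) :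
    ∃ i : Fin N, ∀ P : Fin N → α → α → Prop,
      (∀ j, IsStrictTotalOrder α (P j)) →
      ∀ a b : α, (F P a b ↔ P i a b) := by
  classical
  have hunivDec : ArrowProof.Dec F Finset.univ := by
    intro a b hab P hP hin hout
    exact hUnan P hP a b (fun j => hin j (Finset.mem_univ j))
  rcases (Finset.univ : Finset (Fin N)).eq_empty_or_nonempty with he | hne
  · rw [he] at hunivDec
    exact absurd hunivDec (ArrowProof.not_dec_empty F hF hUnan hIIA hcard)
  obtain ⟨i, hi⟩ :=
    ArrowProof.exists_dict_set F hF hUnan hIIA hcard Finset.univ hunivDec hne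
  refine ⟨i, fun P hP a b => ?_⟩
  constructor
  · intro hFab
    rcases ArrowProof.sto_tri (hP i) a b with h | rfl | h
    · exact h
    · exact absurd hFab (ArrowProof.sto_irrefl (hF P hP) a)
    · exact absurd hFab
        (ArrowProof.sto_asymm (hF P hP)
          (ArrowProof.dict F hF hUnan hIIA hcard hi P hP b a h))
  · exact fun h => ArrowProof.dict F hF hUnan hIIA hcard hi P hP a b h
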